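/- arXiv:2002.06262 — 7 statements merged into one kernel-verified Lean document; each statement's English description precedes it below -/
import Mathlib

section
/- The dual activation of the normalized ReLU function σ(z)=√2·max(0,z) satisfies σ̂(ρ) = (√(1-ρ²) + (π - arccos(ρ))·ρ)/π for ρ ∈ [-1,1], where σ̂(ρ) = E[σ(X)σ(X̃)] with (X,X̃) jointly Gaussian with mean zero, unit variances, and correlation ρ. -/
open MeasureTheory ProbabilityTheory Real
-- radial integral
lemma radial_int : ∫ r in Set.Ioi (0:ℝ), r ^ 3 * rexp (-r ^ 2 / 2) = 2 := by
  have hderiv : ∀ r ∈ Set.Ioi (0:ℝ),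
      HasDerivAt (fun r : ℝ => -(r ^ 2 + 2) * rexp (-r ^ 2 / 2)) (r ^ 3 * rexp (-r ^ 2 / 2)) r := by
    intro r _
    have h1 : HasDerivAt (fun r : ℝ => -(r ^ 2 + 2)) (-(2 * r)) r := by
      have := (hasDerivAt_pow 2 r).add_const 2
      refine this.neg.congr_deriv ?_
      norm_num
    have h2 : HasDerivAt (fun r : ℝ => rexp (-r ^ 2 / 2)) (rexp (-r ^ 2 / 2) * (-r)) r := by
      have h3 : HasDerivAt (fun r : ℝ => -r ^ 2 / 2) (-r) r := by
        have := (hasDerivAt_pow 2 r).neg.div_const 2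
        refine this.congr_deriv ?_
        norm_num
        ring
      simpa using h3.exp
    have := h1.mul h2
    refine this.congr_deriv ?_
    ring
  have hcont : ContinuousWithinAt (fun r : ℝ => -(r ^ 2 + 2) * rexp (-r ^ 2 / 2))
      (Set.Ici 0) 0 := by
    apply Continuous.continuousWithinAt
    continuity
  have hint : IntegrableOn (fun r : ℝ => r ^ 3 * rexp (-r ^ 2 / 2)) (Set.Ioi 0) := by
    have := integrableOn_rpow_mul_exp_neg_mul_sq (b := 1/2) (by norm_num) (s := 3) (by norm_num)
    refine this.congr_fun (fun x hx => ?_) measurableSet_Ioi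
    beta_reduce
    rw [show (3:ℝ) = ((3:ℕ):ℝ) by norm_num, Real.rpow_natCast]
    congr 1
    ring
  have htend : Filter.Tendsto (fun r : ℝ => -(r ^ 2 + 2) * rexp (-r ^ 2 / 2))
      Filter.atTop (nhds 0) := by
    have key : Filter.Tendsto (fun u : ℝ => -(2 * u + 2) * rexp (-u)) Filter.atTop (nhds 0) := by
      have h1 := tendsto_pow_mul_exp_neg_atTop_nhds_zero 1
      have h2 := Real.tendsto_exp_neg_atTop_nhds_zero
      have := ((h1.const_mul (-2)).sub (h2.const_mul 2))
      simp only [mul_zero, sub_zero, zero_sub] at this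
      convert this using 2 with u
      simp [pow_one]
      ring
    have hcomp : Filter.Tendsto (fun r : ℝ => r ^ 2 / 2) Filter.atTop Filter.atTop := by
      apply Filter.Tendsto.atTop_div_const (by norm_num)
      exact Filter.tendsto_pow_atTop (by norm_num)
    have := key.comp hcomp
    convert this using 2 with r
    simp only [Function.comp]
    ring_nf
  have := integral_Ioi_of_hasDerivAt_of_tendsto hcont hderiv hint htend
  rw [this]
  norm_num


-- antiderivative step
lemma mid_int (α : ℝ) :
    ∫ θ in (α - π/2)..(π/2), Real.cos θ * Real.cos (θ - α)
      = ((π - α) * Real.cos α + Real.sin α) / 2 := by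
  have hd : ∀ θ ∈ Set.uIcc (α - π/2) (π/2),
      HasDerivAt (fun θ : ℝ => (θ * Real.cos α) / 2 + Real.sin (2*θ - α) / 4)
        (Real.cos θ * Real.cos (θ - α)) θ := by
    intro θ _
    have h1 : HasDerivAt (fun θ : ℝ => (θ * Real.cos α) / 2) (Real.cos α / 2) θ := by
      have := (hasDerivAt_id θ).mul_const (Real.cos α)
      simpa using this.div_const 2
    have h2 : HasDerivAt (fun θ : ℝ => Real.sin (2*θ - α) / 4) (Real.cos (2*θ - α) / 2) θ := by
      have h3 : HasDerivAt (fun θ : ℝ => 2*θ - α) 2 θ := by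
        simpa using ((hasDerivAt_id θ).const_mul 2).sub_const α
      have := (h3.sin).div_const 4
      refine this.congr_deriv ?_
      ring
    have := h1.add h2
    refine this.congr_deriv ?_
    have e1 : Real.cos (2*θ - α) = Real.cos θ * Real.cos (θ - α) - Real.sin θ * Real.sin (θ - α) := by
      rw [show 2*θ - α = θ + (θ - α) by ring, Real.cos_add]
    have e2 := Real.cos_sub θ (θ - α)
    rw [sub_sub_cancel] at e2
    linarith [e1, e2]
  have hcont : ContinuousOn (fun θ : ℝ => Real.cos θ * Real.cos (θ - α))
      (Set.uIcc (α - π/2) (π/2)) := by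
    apply Continuous.continuousOn
    continuity
  rw [intervalIntegral.integral_eq_sub_of_hasDerivAt hd (hcont.intervalIntegrable)]
  have s1 : Real.sin (2 * (π/2) - α) = Real.sin α := by
    rw [show 2 * (π/2) - α = π - α by ring, Real.sin_pi_sub]
  have s2 : Real.sin (2 * (α - π/2) - α) = -Real.sin α := by
    rw [show 2 * (α - π/2) - α = α - π by ring, Real.sin_sub_pi]
  rw [s1, s2]
  ring

lemma angle_int (ρ : ℝ) (hρ : ρ ∈ Set.Icc (-1 : ℝ) 1) :
    ∫ θ in Set.Ioo (-π) π, max 0 (Real.cos θ) * max 0 (ρ * Real.cos θ + Real.sqrt (1 - ρ ^ 2) * Real.sin θ)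
      = ((π - Real.arccos ρ) * ρ + Real.sqrt (1 - ρ ^ 2)) / 2 := by
  set α := Real.arccos ρ with hα
  have hα0 : 0 ≤ α := Real.arccos_nonneg ρ
  have hαπ : α ≤ π := Real.arccos_le_pi ρ
  have hcos : Real.cos α = ρ := Real.cos_arccos hρ.1 hρ.2
  have hsin : Real.sin α = Real.sqrt (1 - ρ ^ 2) := by
    rw [hα, Real.sin_arccos]
  -- rewrite integrand
  have hrw : ∀ θ : ℝ, ρ * Real.cos θ + Real.sqrt (1 - ρ ^ 2) * Real.sin θ = Real.cos (θ - α) := by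
    intro θ
    rw [Real.cos_sub, hcos, hsin]
    ring
  simp only [hrw]
  have hπ := Real.pi_pos
  -- convert to interval integral
  rw [← MeasureTheory.integral_Ioc_eq_integral_Ioo,
    ← intervalIntegral.integral_of_le (by linarith : -π ≤ π)]
  set g := fun θ : ℝ => max 0 (Real.cos θ) * max 0 (Real.cos (θ - α)) with hg
  have hgc : Continuous g := by
    apply Continuous.mul
    · exact continuous_const.max Real.continuous_cos
    · exact continuous_const.max (Real.continuous_cos.comp (continuous_id.sub continuous_const))
  have hle1 : -π ≤ α - π/2 := by linarith
  have hle2 : α - π/2 ≤ π/2 := by linarith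
  have hle3 : (π/2 : ℝ) ≤ π := by linarith
  have hzero1 : ∀ θ ∈ Set.uIcc (-π) (α - π/2), g θ = 0 := by
    intro θ hθ
    rw [Set.uIcc_of_le hle1] at hθ
    rcases le_or_gt θ (-(π/2)) with h | h
    · have hc : Real.cos θ ≤ 0 := by
        rw [← Real.cos_neg]
        apply Real.cos_nonpos_of_pi_div_two_le_of_le
        · linarith
        · linarith [hθ.1]
      rw [hg]
      simp only [max_eq_left hc, zero_mul]
    · have hc : Real.cos (θ - α) ≤ 0 := by
        rw [← Real.cos_neg, neg_sub]
        apply Real.cos_nonpos_of_pi_div_two_le_of_le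
        · linarith [hθ.2]
        · linarith
      rw [hg]
      simp only [max_eq_left hc, mul_zero]
  have hzero3 : ∀ θ ∈ Set.uIcc (π/2) π, g θ = 0 := by
    intro θ hθ
    rw [Set.uIcc_of_le hle3] at hθ
    have hc : Real.cos θ ≤ 0 := by
      apply Real.cos_nonpos_of_pi_div_two_le_of_le
      · exact hθ.1
      · linarith [hθ.2]
    rw [hg]
    simp only [max_eq_left hc, zero_mul]
  have hmid : Set.EqOn g (fun θ => Real.cos θ * Real.cos (θ - α))
      (Set.uIcc (α - π/2) (π/2)) := by
    intro θ hθ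
    rw [Set.uIcc_of_le hle2] at hθ
    have h1 : 0 ≤ Real.cos θ :=
      Real.cos_nonneg_of_mem_Icc ⟨by linarith [hθ.1], hθ.2⟩
    have h2 : 0 ≤ Real.cos (θ - α) :=
      Real.cos_nonneg_of_mem_Icc ⟨by linarith [hθ.1], by linarith [hθ.2]⟩
    rw [hg]
    simp only [max_eq_right h1, max_eq_right h2]
  have hii : ∀ a b : ℝ, IntervalIntegrable g volume a b :=
    fun a b => hgc.intervalIntegrable a b
  have hsplit : ∫ θ in (-π)..π, g θ
      = (∫ θ in (-π)..(α - π/2), g θ) + ((∫ θ in (α - π/2)..(π/2), g θ)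
        + ∫ θ in (π/2)..π, g θ) := by
    rw [intervalIntegral.integral_add_adjacent_intervals (hii _ _) (hii _ _),
      intervalIntegral.integral_add_adjacent_intervals (hii _ _) (hii _ _)]
  have e1 : ∫ θ in (-π)..(α - π/2), g θ = 0 := by
    rw [intervalIntegral.integral_congr hzero1]
    simp
  have e3 : ∫ θ in (π/2)..π, g θ = 0 := by
    rw [intervalIntegral.integral_congr hzero3]
    simp
  have e2 : ∫ θ in (α - π/2)..(π/2), g θ = ((π - α) * ρ + Real.sqrt (1 - ρ ^ 2)) / 2 := by
    rw [intervalIntegral.integral_congr hmid, mid_int α, hcos, hsin]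
  rw [hsplit, e1, e2, e3]
  ring


/-- Normalized ReLU: σ(z) = √2 · max(0,z). -/
noncomputable def nrelu (z : ℝ) : ℝ := Real.sqrt 2 * max 0 z

/-- Product of two standard Gaussians on ℝ², used to represent a correlated
bivariate Gaussian via (X, X̃) = (z₁, ρ z₁ + √(1-ρ²) z₂). -/
noncomputable def stdGauss2 : Measure (ℝ × ℝ) :=
  (gaussianReal 0 1).prod (gaussianReal 0 1)

lemma stdGauss2_eq_withDensity : stdGauss2 = (volume : Measure (ℝ × ℝ)).withDensity
    (fun z => ((gaussianPDFReal 0 1 z.1 * gaussianPDFReal 0 1 z.2).toNNReal : ENNReal)) := by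
  have hdens : (fun z : ℝ × ℝ =>
      ((gaussianPDFReal 0 1 z.1 * gaussianPDFReal 0 1 z.2).toNNReal : ENNReal))
      = fun z : ℝ × ℝ => gaussianPDF 0 1 z.1 * gaussianPDF 0 1 z.2 := by
    funext z
    rw [gaussianPDF_def]
    rw [show ((gaussianPDFReal 0 1 z.1 * gaussianPDFReal 0 1 z.2).toNNReal : ENNReal)
      = ENNReal.ofReal (gaussianPDFReal 0 1 z.1 * gaussianPDFReal 0 1 z.2) from rfl]
    rw [ENNReal.ofReal_mul (gaussianPDFReal_nonneg 0 1 z.1)]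
  rw [hdens, stdGauss2, gaussianReal_of_var_ne_zero 0 one_ne_zero]
  haveI : SigmaFinite ((volume : Measure ℝ).withDensity (gaussianPDF 0 1)) := by
    rw [← gaussianReal_of_var_ne_zero 0 one_ne_zero]; infer_instance
  refine Measure.prod_eq fun s t hs ht => ?_
  rw [withDensity_apply _ (hs.prod ht), Measure.volume_eq_prod, ← Measure.prod_restrict,
    lintegral_prod_mul (measurable_gaussianPDF 0 1).aemeasurable
      (measurable_gaussianPDF 0 1).aemeasurable,
    withDensity_apply _ hs, withDensity_apply _ ht]

/-- The dual activation of the normalized ReLU: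
E[σ(X)σ(X̃)] = (√(1-ρ²) + (π - arccos ρ)·ρ)/π for correlation ρ ∈ [-1,1]. -/
theorem dual_activation_nrelu (ρ : ℝ) (hρ : ρ ∈ Set.Icc (-1 : ℝ) 1) :
    ∫ p : ℝ × ℝ, nrelu p.1 * nrelu (ρ * p.1 + Real.sqrt (1 - ρ ^ 2) * p.2) ∂stdGauss2
      = (Real.sqrt (1 - ρ ^ 2) + (π - Real.arccos ρ) * ρ) / π := by
  have hmeasD : Measurable (fun z : ℝ × ℝ =>
      (gaussianPDFReal 0 1 z.1 * gaussianPDFReal 0 1 z.2).toNNReal) :=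
    measurable_real_toNNReal.comp
      (((measurable_gaussianPDFReal 0 1).comp measurable_fst).mul
        ((measurable_gaussianPDFReal 0 1).comp measurable_snd))
  rw [stdGauss2_eq_withDensity,
    integral_withDensity_eq_integral_smul hmeasD
      (fun p : ℝ × ℝ => nrelu p.1 * nrelu (ρ * p.1 + Real.sqrt (1 - ρ ^ 2) * p.2))]
  set F : ℝ × ℝ → ℝ := fun z =>
    (gaussianPDFReal 0 1 z.1 * gaussianPDFReal 0 1 z.2).toNNReal •
      (nrelu z.1 * nrelu (ρ * z.1 + Real.sqrt (1 - ρ ^ 2) * z.2)) with hF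
  rw [← integral_comp_polarCoord_symm F]
  set G : ℝ → ℝ := fun θ =>
    max 0 (Real.cos θ) * max 0 (ρ * Real.cos θ + Real.sqrt (1 - ρ ^ 2) * Real.sin θ) with hG
  have hcongr : ∀ p ∈ polarCoord.target,
      p.1 • F (polarCoord.symm p) = (p.1 ^ 3 * rexp (-p.1 ^ 2 / 2)) * (G p.2 / π) := by
    rintro ⟨r, θ⟩ hp
    have hr : 0 < r := hp.1
    have hsymm : polarCoord.symm (r, θ) = (r * Real.cos θ, r * Real.sin θ) := rfl
    have hpdf : gaussianPDFReal 0 1 (r * Real.cos θ) * gaussianPDFReal 0 1 (r * Real.sin θ)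
        = (2 * π)⁻¹ * rexp (-r ^ 2 / 2) := by
      rw [gaussianPDFReal, gaussianPDFReal]
      have h1 : (√(2 * π * ((1:NNReal):ℝ)))⁻¹ * (√(2 * π * ((1:NNReal):ℝ)))⁻¹ = (2 * π)⁻¹ := by
        rw [NNReal.coe_one, mul_one, ← mul_inv, Real.mul_self_sqrt (by positivity)]
      have h2 : rexp (-(r * Real.cos θ - 0) ^ 2 / (2 * (1:NNReal)))
          * rexp (-(r * Real.sin θ - 0) ^ 2 / (2 * (1:NNReal)))
          = rexp (-r ^ 2 / 2) := by
        rw [← Real.exp_add]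
        congr 1
        have := Real.sin_sq_add_cos_sq θ
        push_cast
        nlinarith [this]
      calc _ = ((√(2 * π * (1:NNReal)))⁻¹ * (√(2 * π * (1:NNReal)))⁻¹)
            * (rexp (-(r * Real.cos θ - 0) ^ 2 / (2 * (1:NNReal)))
              * rexp (-(r * Real.sin θ - 0) ^ 2 / (2 * (1:NNReal)))) := by ring
        _ = (2 * π)⁻¹ * rexp (-r ^ 2 / 2) := by rw [h1, h2]
    have hmax : ∀ c : ℝ, max 0 (r * c) = r * max 0 c := by
      intro c
      rw [mul_max_of_nonneg _ _ hr.le, mul_zero]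
    have hpos : 0 ≤ gaussianPDFReal 0 1 (r * Real.cos θ) * gaussianPDFReal 0 1 (r * Real.sin θ) :=
      mul_nonneg (gaussianPDFReal_nonneg 0 1 _) (gaussianPDFReal_nonneg 0 1 _)
    rw [hF]
    simp only [hsymm, NNReal.smul_def, Real.coe_toNNReal _ hpos, smul_eq_mul]
    rw [hpdf, nrelu, nrelu]
    rw [show ρ * (r * Real.cos θ) + Real.sqrt (1 - ρ ^ 2) * (r * Real.sin θ)
      = r * (ρ * Real.cos θ + Real.sqrt (1 - ρ ^ 2) * Real.sin θ) by ring]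
    rw [hmax, hmax, hG]
    have hs2 : Real.sqrt 2 * Real.sqrt 2 = 2 := Real.mul_self_sqrt (by norm_num)
    have hπ : (π : ℝ) ≠ 0 := Real.pi_ne_zero
    field_simp
    ring_nf
    rw [show (Real.sqrt 2) ^ 2 = (2:ℝ) by rw [sq]; exact hs2]
    ring
  rw [setIntegral_congr_fun (polarCoord.open_target.measurableSet) hcongr]
  rw [show polarCoord.target = Set.Ioi (0:ℝ) ×ˢ Set.Ioo (-π) π from rfl,
    Measure.volume_eq_prod, ← Measure.prod_restrict]
  rw [integral_prod_mul (f := fun r : ℝ => r ^ 3 * rexp (-r ^ 2 / 2)) (g := fun θ => G θ / π)]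
  rw [integral_div]
  have h1 : ∫ r in Set.Ioi (0:ℝ), r ^ 3 * rexp (-r ^ 2 / 2) = 2 := radial_int
  have h2 : ∫ θ in Set.Ioo (-π) π, G θ
      = ((π - Real.arccos ρ) * ρ + Real.sqrt (1 - ρ ^ 2)) / 2 := angle_int ρ hρ
  rw [h1, h2]
  have hπ : (π : ℝ) ≠ 0 := Real.pi_ne_zero
  field_simp
  ring
end

section
/- For all ρ ∈ [-1,1], the function σ̂(ρ) = (√(1-ρ²) + (π - arccos ρ)·ρ)/π satisfies σ̂(ρ) ≥ ρ, with equality if and only if ρ = 1. -/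
open Real

/-- Dual activation of the normalized ReLU. -/
noncomputable def hatSigma (ρ : ℝ) : ℝ :=
  (Real.sqrt (1 - ρ ^ 2) + (π - Real.arccos ρ) * ρ) / π

lemma hatSigma_key (ρ : ℝ) (h1 : -1 ≤ ρ) (h2 : ρ < 1) :
    Real.arccos ρ * ρ < Real.sqrt (1 - ρ ^ 2) := by
  rcases le_or_gt ρ 0 with h | h
  · rcases eq_or_lt_of_le h with rfl | h
    · simp
    · have hpos : 0 < Real.arccos ρ := Real.arccos_pos.2 h2
      exact (mul_neg_of_pos_of_neg hpos h).trans_le (Real.sqrt_nonneg _)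
  · have hθpos : 0 < Real.arccos ρ := Real.arccos_pos.2 h2
    have hθlt : Real.arccos ρ < π / 2 := Real.arccos_lt_pi_div_two.2 h
    have hcos : Real.cos (Real.arccos ρ) = ρ := Real.cos_arccos h1 h2.le
    have hsin : Real.sin (Real.arccos ρ) = Real.sqrt (1 - ρ ^ 2) := Real.sin_arccos ρ
    have htan := Real.lt_tan hθpos hθlt
    have hcpos : 0 < Real.cos (Real.arccos ρ) := by rw [hcos]; exact h
    calc Real.arccos ρ * ρ < Real.tan (Real.arccos ρ) * ρ := by
          exact mul_lt_mul_of_pos_right htan h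
      _ = Real.sqrt (1 - ρ ^ 2) := by
          rw [Real.tan_eq_sin_div_cos, hcos, div_mul_cancel₀ _ (ne_of_gt h), hsin]

/-- σ̂(ρ) ≥ ρ on [-1,1], with equality iff ρ = 1. -/
theorem hatSigma_ge (ρ : ℝ) (hρ : ρ ∈ Set.Icc (-1 : ℝ) 1) :
    ρ ≤ hatSigma ρ ∧ (hatSigma ρ = ρ ↔ ρ = 1) := by
  obtain ⟨h1, h2⟩ := hρ
  have hπ : (0:ℝ) < π := Real.pi_pos
  rcases eq_or_lt_of_le h2 with rfl | h2
  · constructor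
    · unfold hatSigma
      simp [Real.arccos_one, div_self hπ.ne']
    · constructor <;> intro _ <;> [rfl; skip]
      unfold hatSigma
      simp [Real.arccos_one, div_self hπ.ne']
  · have key := hatSigma_key ρ h1 h2
    have hlt : ρ < hatSigma ρ := by
      unfold hatSigma
      rw [lt_div_iff₀ hπ]
      nlinarith
    exact ⟨hlt.le, by constructor <;> intro h <;> [linarith; linarith]⟩
end

section
/- Fix K₀ ∈ [-1,1) and define the sequence K_{ℓ} = σ̂(K_{ℓ-1}) where σ̂(ρ) = (√(1-ρ²) + (π - arccos ρ)·ρ)/π. Then the sequence (K_ℓ) is nondecreasing, bounded above by 1, and converges to 1 as ℓ → ∞. -/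
open Real Filter

lemma key_strict {ρ : ℝ} (h1 : -1 ≤ ρ) (h2 : ρ < 1) :
    ρ * Real.arccos ρ < Real.sqrt (1 - ρ ^ 2) := by
  rcases le_or_gt ρ 0 with hle | hpos
  · have harc : 0 < Real.arccos ρ := Real.arccos_pos.mpr h2
    rcases eq_or_lt_of_le hle with rfl | hlt
    · simpa using Real.sqrt_pos.mpr (by norm_num : (0:ℝ) < 1 - 0 ^ 2)
    · have : ρ * Real.arccos ρ < 0 := mul_neg_of_neg_of_pos hlt harc
      exact this.trans_le (Real.sqrt_nonneg _)
  · set θ := Real.arccos ρ with hθ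
    have hθpos : 0 < θ := Real.arccos_pos.mpr h2
    have hθlt : θ < π / 2 := Real.arccos_lt_pi_div_two.mpr hpos
    have hcos : Real.cos θ = ρ := Real.cos_arccos h1 h2.le
    have hsin : Real.sin θ = Real.sqrt (1 - ρ ^ 2) := Real.sin_arccos ρ
    have htan : θ < Real.tan θ := Real.lt_tan hθpos hθlt
    have : θ * Real.cos θ < Real.tan θ * Real.cos θ :=
      mul_lt_mul_of_pos_right htan (by rw [hcos]; exact hpos)
    rw [Real.tan_eq_sin_div_cos, div_mul_cancel₀] at this
    · rw [← hsin, ← hcos]; linarith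
    · rw [hcos]; exact hpos.ne'

lemma hatSigma_gt {ρ : ℝ} (h1 : -1 ≤ ρ) (h2 : ρ < 1) : ρ < hatSigma ρ := by
  have hπ : 0 < π := Real.pi_pos
  have := key_strict h1 h2
  rw [hatSigma, lt_div_iff₀ hπ]
  nlinarith [this]

lemma hatSigma_le_one {ρ : ℝ} (h1 : -1 ≤ ρ) (h2 : ρ ≤ 1) : hatSigma ρ ≤ 1 := by
  have hπ : 0 < π := Real.pi_pos
  set θ := Real.arccos ρ with hθ
  have hθ0 : 0 ≤ θ := Real.arccos_nonneg ρ
  have hθπ : θ ≤ π := Real.arccos_le_pi ρ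
  have hcos : Real.cos θ = ρ := Real.cos_arccos h1 h2
  have hsin : Real.sin θ = Real.sqrt (1 - ρ ^ 2) := Real.sin_arccos ρ
  have hsinle : Real.sin θ ≤ θ := Real.sin_le hθ0
  have hcosle : Real.cos θ ≤ 1 := Real.cos_le_one θ
  have hs : Real.sqrt (1 - ρ ^ 2) ≤ θ := hsin ▸ hsinle
  have h4 : (π - θ) * ρ ≤ (π - θ) * 1 := mul_le_mul_of_nonneg_left h2 (by linarith)
  rw [hatSigma, div_le_one hπ, ← hθ]
  linarith

lemma hatSigma_ge_s4 {ρ : ℝ} (h1 : -1 ≤ ρ) (h2 : ρ ≤ 1) : ρ ≤ hatSigma ρ := by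
  rcases eq_or_lt_of_le h2 with rfl | hlt
  · simp [hatSigma, Real.arccos_one, Real.pi_ne_zero]
  · exact (hatSigma_gt h1 hlt).le

lemma hatSigma_continuous : Continuous hatSigma := by
  unfold hatSigma
  exact ((((continuous_const.sub (continuous_pow 2)).sqrt).add
    ((continuous_const.sub Real.continuous_arccos).mul continuous_id)).div_const π)

/-- The iterates K_{ℓ} = σ̂(K_{ℓ-1}) starting from K₀ ∈ [-1,1) are nondecreasing,
bounded above by 1, and converge to 1. -/
theorem iterates_to_one (K₀ : ℝ) (h : K₀ ∈ Set.Ico (-1 : ℝ) 1)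
    (K : ℕ → ℝ) (h0 : K 0 = K₀) (hrec : ∀ ℓ : ℕ, K (ℓ + 1) = hatSigma (K ℓ)) :
    Monotone K ∧ (∀ ℓ, K ℓ ≤ 1) ∧ Tendsto K atTop (nhds 1) := by
  obtain ⟨hK₀l, hK₀u⟩ := h
  have hmem : ∀ ℓ, -1 ≤ K ℓ ∧ K ℓ ≤ 1 := by
    intro ℓ
    induction ℓ with
    | zero => exact ⟨h0 ▸ hK₀l, h0 ▸ hK₀u.le⟩
    | succ n ih =>
      rw [hrec]
      exact ⟨le_trans ih.1 (hatSigma_ge_s4 ih.1 ih.2), hatSigma_le_one ih.1 ih.2⟩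
  have hmono : Monotone K := by
    apply monotone_nat_of_le_succ
    intro n
    rw [hrec]
    exact hatSigma_ge_s4 (hmem n).1 (hmem n).2
  have hbdd : BddAbove (Set.range K) := ⟨1, by rintro x ⟨n, rfl⟩; exact (hmem n).2⟩
  set L := ⨆ n, K n with hL
  have htend : Tendsto K atTop (nhds L) := tendsto_atTop_ciSup hmono hbdd
  have hLle : L ≤ 1 := ciSup_le fun n => (hmem n).2
  have hLge : -1 ≤ L := le_trans (hmem 0).1 (le_ciSup hbdd 0)
  have hfix : hatSigma L = L := by
    have h1 : Tendsto (fun n => K (n + 1)) atTop (nhds L) :=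
      htend.comp (tendsto_add_atTop_nat 1)
    have h2 : Tendsto (fun n => hatSigma (K n)) atTop (nhds (hatSigma L)) :=
      (hatSigma_continuous.tendsto L).comp htend
    have h3 : Tendsto (fun n => K (n + 1)) atTop (nhds (hatSigma L)) := by
      simpa only [hrec] using h2
    exact tendsto_nhds_unique h3 h1
  have hLeq : L = 1 := by
    by_contra hne
    have hlt : L < 1 := lt_of_le_of_ne hLle hne
    exact absurd hfix (ne_of_gt (hatSigma_gt hLge hlt))
  exact ⟨hmono, fun ℓ => (hmem ℓ).2, hLeq ▸ htend⟩
end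

section
/- Let e ∈ (0,1) and let e' = e - (σ̂(1-e) - (1-e)) where σ̂(ρ) = (√(1-ρ²) + (π - arccos ρ)·ρ)/π; equivalently 1 - e' = σ̂(1-e). Then e - e^{3/2}/π ≤ e' ≤ e - (2√2/(3π))·e^{3/2}. -/
open Real

/-- Concavity of sin: for `0 ≤ a ≤ b ≤ π`, `a * sin b ≤ b * sin a`. -/
lemma sin_mul_ineq {a b : ℝ} (ha : 0 ≤ a) (hab : a ≤ b) (hb : b ≤ π) :
    a * Real.sin b ≤ b * Real.sin a := by
  rcases eq_or_lt_of_le (ha.trans hab) with h | hbpos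
  · have : a = 0 := le_antisymm (h ▸ hab) ha
    simp [this, ← h]
  · have hconc := strictConcaveOn_sin_Icc.concaveOn
    have h0 : (0:ℝ) ∈ Set.Icc (0:ℝ) π := ⟨le_refl _, Real.pi_pos.le⟩
    have hbmem : b ∈ Set.Icc (0:ℝ) π := ⟨hbpos.le, hb⟩
    have hw1 : (0:ℝ) ≤ 1 - a / b := by
      rw [sub_nonneg]; exact div_le_one_of_le₀ hab hbpos.le
    have hw2 : (0:ℝ) ≤ a / b := div_nonneg ha hbpos.le
    have hsum : (1 - a / b) + a / b = 1 := by ring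
    have := hconc.2 h0 hbmem hw1 hw2 hsum
    simp only [smul_eq_mul, mul_zero, zero_add, Real.sin_zero] at this
    have ha' : (a / b) * b = a := div_mul_cancel₀ a hbpos.ne'
    rw [ha'] at this
    have := mul_le_mul_of_nonneg_left this hbpos.le
    calc a * Real.sin b = b * (a/b * Real.sin b) := by field_simp
      _ ≤ b * Real.sin a := this

/-- Lower trig bound: `(8/3) sin³ s ≤ sin 2s - 2s cos 2s` for `s ∈ [0, π/2]`. -/
lemma lower_trig {s : ℝ} (h0 : 0 ≤ s) (h2 : s ≤ π / 2) :
    (8/3) * Real.sin s ^ 3 ≤ Real.sin (2*s) - 2*s*Real.cos (2*s) := by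
  set G : ℝ → ℝ := fun t => Real.sin (2*t) - 2*t*Real.cos (2*t) - (8/3) * Real.sin t ^ 3
    with hGdef
  have hG : ∀ t : ℝ, HasDerivAt G (8 * Real.sin t * Real.cos t * (t - Real.sin t)) t := by
    intro t
    have h2t : HasDerivAt (fun x : ℝ => 2*x) 2 t := by
      simpa using (hasDerivAt_id t).const_mul 2
    have hs : HasDerivAt (fun x : ℝ => Real.sin (2*x)) (Real.cos (2*t) * 2) t := h2t.sin
    have hc : HasDerivAt (fun x : ℝ => Real.cos (2*x)) (-Real.sin (2*t) * 2) t := h2t.cos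
    have hm : HasDerivAt (fun x : ℝ => 2*x*Real.cos (2*x))
        (2 * Real.cos (2*t) + 2*t*(-Real.sin (2*t) * 2)) t := h2t.mul hc
    have hp : HasDerivAt (fun x : ℝ => (8/3) * Real.sin x ^ 3)
        ((8/3) * (3 * Real.sin t ^ 2 * Real.cos t)) t := by
      have := ((Real.hasDerivAt_sin t).pow 3).const_mul (8/3 : ℝ)
      simpa [mul_comm, mul_assoc, mul_left_comm] using this
    have := (hs.sub hm).sub hp
    refine this.congr_deriv ?_
    rw [Real.sin_two_mul]; ring
  have hmono : MonotoneOn G (Set.Icc 0 (π/2)) := by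
    apply monotoneOn_of_deriv_nonneg (convex_Icc _ _)
    · exact fun t _ => ((hG t).continuousAt).continuousWithinAt
    · exact fun t _ => ((hG t).differentiableAt).differentiableWithinAt
    · intro t ht
      rw [interior_Icc] at ht
      rw [(hG t).deriv]
      have h1 : 0 ≤ Real.sin t := Real.sin_nonneg_of_nonneg_of_le_pi ht.1.le
        (ht.2.le.trans (by linarith [Real.pi_pos]))
      have h2 : 0 ≤ Real.cos t := Real.cos_nonneg_of_mem_Icc ⟨by linarith [Real.pi_pos, ht.1], ht.2.le⟩
      have h3 : Real.sin t ≤ t := Real.sin_le ht.1.le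
      have h4 : (0:ℝ) ≤ t - Real.sin t := by linarith
      have := mul_nonneg (mul_nonneg (mul_nonneg (by norm_num : (0:ℝ) ≤ 8) h1) h2) h4
      linarith
  have key := hmono (Set.left_mem_Icc.2 (by linarith [Real.pi_pos])) ⟨h0, h2⟩ h0
  simp only [hGdef, mul_zero, Real.sin_zero, Real.cos_zero, zero_mul] at key
  norm_num at key
  linarith

/-- Upper trig bound: `sin 2s - 2s cos 2s ≤ 2√2 sin³ s` for `s ∈ [0, π/4]`. -/
lemma upper_trig {s : ℝ} (h0 : 0 ≤ s) (h4 : s ≤ π / 4) :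
    Real.sin (2*s) - 2*s*Real.cos (2*s) ≤ 2 * Real.sqrt 2 * Real.sin s ^ 3 := by
  set H : ℝ → ℝ := fun t => 2 * Real.sqrt 2 * Real.sin t ^ 3 - Real.sin (2*t) + 2*t*Real.cos (2*t)
    with hHdef
  have hH : ∀ t : ℝ, HasDerivAt H
      (2 * Real.sin t * Real.cos t * (3 * Real.sqrt 2 * Real.sin t - 4 * t)) t := by
    intro t
    have h2t : HasDerivAt (fun x : ℝ => 2*x) 2 t := by
      simpa using (hasDerivAt_id t).const_mul 2
    have hs : HasDerivAt (fun x : ℝ => Real.sin (2*x)) (Real.cos (2*t) * 2) t := h2t.sin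
    have hc : HasDerivAt (fun x : ℝ => Real.cos (2*x)) (-Real.sin (2*t) * 2) t := h2t.cos
    have hm : HasDerivAt (fun x : ℝ => 2*x*Real.cos (2*x))
        (2 * Real.cos (2*t) + 2*t*(-Real.sin (2*t) * 2)) t := h2t.mul hc
    have hp : HasDerivAt (fun x : ℝ => 2 * Real.sqrt 2 * Real.sin x ^ 3)
        (2 * Real.sqrt 2 * (3 * Real.sin t ^ 2 * Real.cos t)) t := by
      have := ((Real.hasDerivAt_sin t).pow 3).const_mul (2 * Real.sqrt 2 : ℝ)
      simpa [mul_comm, mul_assoc, mul_left_comm] using this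
    have := (hp.sub hs).add hm
    refine this.congr_deriv ?_
    rw [Real.sin_two_mul]; ring
  have hH0 : H 0 = 0 := by simp [hHdef]
  have hHpi4 : H (π/4) = 0 := by
    have h2 : 2 * (π/4) = π/2 := by ring
    simp only [hHdef, h2, Real.sin_pi_div_two, Real.cos_pi_div_two, Real.sin_pi_div_four]
    have : Real.sqrt 2 ^ 2 = 2 := Real.sq_sqrt (by norm_num)
    nlinarith [this]
  rcases le_or_gt (4*s) (3 * Real.sqrt 2 * Real.sin s) with hcase | hcase
  · -- H monotone on [0, s]
    have hmono : MonotoneOn H (Set.Icc 0 s) := by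
      apply monotoneOn_of_deriv_nonneg (convex_Icc _ _)
      · exact fun t _ => ((hH t).continuousAt).continuousWithinAt
      · exact fun t _ => ((hH t).differentiableAt).differentiableWithinAt
      · intro t ht
        rw [interior_Icc] at ht
        rw [(hH t).deriv]
        have hpi : π ≤ 4 * π := by linarith [Real.pi_pos]
        have hsle : s ≤ π := by linarith [Real.pi_pos, h4]
        have htpos := ht.1
        have hts := ht.2
        have h1 : 0 ≤ Real.sin t := Real.sin_nonneg_of_nonneg_of_le_pi htpos.le
          (by linarith)
        have h2 : 0 ≤ Real.cos t := Real.cos_nonneg_of_mem_Icc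
          ⟨by linarith [Real.pi_pos], by linarith [Real.pi_pos]⟩
        -- t * sin s ≤ s * sin t
        have hkey := sin_mul_ineq htpos.le hts.le hsle
        have hspos : 0 < s := htpos.trans hts
        have hsq2 : 0 < Real.sqrt 2 := by positivity
        -- 4 t ≤ 3√2 sin t :  s * (3√2 sin t) ≥ 3√2 (t sin s) ≥ t * 4 s
        have : 4 * t ≤ 3 * Real.sqrt 2 * Real.sin t := by
          have h5 : 3 * Real.sqrt 2 * (t * Real.sin s) ≤ 3 * Real.sqrt 2 * (s * Real.sin t) :=
            mul_le_mul_of_nonneg_left hkey (by positivity)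
          have h6 : t * (4 * s) ≤ t * (3 * Real.sqrt 2 * Real.sin s) :=
            mul_le_mul_of_nonneg_left hcase htpos.le
          have h7 : (4*t) * s ≤ (3 * Real.sqrt 2 * Real.sin t) * s := by nlinarith
          exact le_of_mul_le_mul_right h7 hspos
        have h7 : 0 ≤ 3 * Real.sqrt 2 * Real.sin t - 4 * t := by linarith
        positivity
    have := hmono (Set.left_mem_Icc.2 h0) (Set.right_mem_Icc.2 h0) h0
    rw [hH0] at this
    simp only [hHdef] at this
    linarith
  · -- s > 0 and H antitone on [s, π/4]
    have hspos : 0 < s := by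
      by_contra h
      push_neg at h
      have : s = 0 := le_antisymm h h0
      rw [this] at hcase; simp at hcase
    have hanti : AntitoneOn H (Set.Icc s (π/4)) := by
      apply antitoneOn_of_deriv_nonpos (convex_Icc _ _)
      · exact fun t _ => ((hH t).continuousAt).continuousWithinAt
      · exact fun t _ => ((hH t).differentiableAt).differentiableWithinAt
      · intro t ht
        rw [interior_Icc] at ht
        rw [(hH t).deriv]
        have htpos : 0 < t := hspos.trans ht.1
        have htle : t ≤ π := by nlinarith [Real.pi_pos, ht.2]
        have h1 : 0 ≤ Real.sin t := Real.sin_nonneg_of_nonneg_of_le_pi htpos.le htle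
        have h2 : 0 ≤ Real.cos t := Real.cos_nonneg_of_mem_Icc
          ⟨by linarith [Real.pi_pos], by nlinarith [Real.pi_pos, ht.2]⟩
        -- s * sin t ≤ t * sin s
        have hkey := sin_mul_ineq h0 ht.1.le htle
        have : 3 * Real.sqrt 2 * Real.sin t ≤ 4 * t := by
          have h5 : 3 * Real.sqrt 2 * (s * Real.sin t) ≤ 3 * Real.sqrt 2 * (t * Real.sin s) :=
            mul_le_mul_of_nonneg_left hkey (by positivity)
          have h6 : t * (3 * Real.sqrt 2 * Real.sin s) ≤ t * (4 * s) :=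
            mul_le_mul_of_nonneg_left hcase.le htpos.le
          have h7 : (3 * Real.sqrt 2 * Real.sin t) * s ≤ (4*t) * s := by nlinarith
          exact le_of_mul_le_mul_right h7 hspos
        have h7 : 3 * Real.sqrt 2 * Real.sin t - 4 * t ≤ 0 := by linarith
        have h8 : 0 ≤ 2 * Real.sin t * Real.cos t := by positivity
        exact mul_nonpos_of_nonneg_of_nonpos h8 h7
    have := hanti (Set.left_mem_Icc.2 h4) (Set.right_mem_Icc.2 h4) h4
    rw [hHpi4] at this
    simp only [hHdef] at this
    linarith

/-- With e ∈ (0,1) and e' = 1 - σ̂(1-e), we have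
e - e^{3/2}/π ≤ e' ≤ e - (2√2/(3π))·e^{3/2}. -/
theorem error_recursion_bounds (e : ℝ) (he : e ∈ Set.Ioo (0 : ℝ) 1) :
    e - e ^ ((3 : ℝ) / 2) / π ≤ 1 - hatSigma (1 - e) ∧
    1 - hatSigma (1 - e) ≤ e - (2 * Real.sqrt 2 / (3 * π)) * e ^ ((3 : ℝ) / 2) := by
  obtain ⟨he0, he1⟩ := he
  have hρ0 : (0:ℝ) < 1 - e := by linarith
  have hρ1 : 1 - e < 1 := by linarith
  set θ := Real.arccos (1 - e) with hθdef
  have hθ0 : 0 < θ := Real.arccos_pos.2 hρ1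
  have hθ2 : θ < π / 2 := Real.arccos_lt_pi_div_two.2 hρ0
  have hcos : Real.cos θ = 1 - e := Real.cos_arccos (by linarith) (by linarith)
  have hsin : Real.sin θ = Real.sqrt (1 - (1-e)^2) := Real.sin_arccos (1-e)
  set s := θ / 2 with hsdef
  have hs0 : 0 < s := by positivity
  have hs4 : s < π / 4 := by rw [hsdef]; linarith
  have hθeq : θ = 2 * s := by rw [hsdef]; ring
  have hsin_s_nonneg : 0 ≤ Real.sin s := Real.sin_nonneg_of_nonneg_of_le_pi hs0.le
    (by linarith [Real.pi_pos])
  have hesin : e = 2 * Real.sin s ^ 2 := by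
    have := Real.cos_two_mul s
    rw [← hθeq, hcos] at this
    have hpyth := Real.sin_sq_add_cos_sq s
    nlinarith
  -- e^(3/2) = 2√2 sin³ s
  have hrpow : e ^ ((3:ℝ)/2) = 2 * Real.sqrt 2 * Real.sin s ^ 3 := by
    have h1 : e ^ ((3:ℝ)/2) = Real.sqrt e ^ 3 := by
      rw [show ((3:ℝ)/2) = (1/2 : ℝ) * (3:ℕ) by norm_num, Real.rpow_mul he0.le,
        Real.rpow_natCast, ← Real.sqrt_eq_rpow]
    have h2 : Real.sqrt e = Real.sqrt 2 * Real.sin s := by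
      rw [hesin, show (2 : ℝ) * Real.sin s ^ 2 = 2 * Real.sin s ^ 2 by ring,
        Real.sqrt_mul (by norm_num : (0:ℝ) ≤ 2), Real.sqrt_sq hsin_s_nonneg]
    rw [h1, h2]
    have h3 : Real.sqrt 2 ^ 3 = 2 * Real.sqrt 2 := by
      rw [pow_succ, Real.sq_sqrt (by norm_num : (0:ℝ) ≤ 2)]
    rw [mul_pow, h3]
    try ring
  -- 1 - hatSigma (1-e) = e - (sin θ - θ cos θ)/π
  have hsig : 1 - hatSigma (1 - e) = e - (Real.sin θ - θ * Real.cos θ) / π := by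
    rw [hatSigma, ← hθdef, ← hsin, hcos]
    field_simp
    ring
  have hπ : 0 < π := Real.pi_pos
  have hlow := lower_trig hs0.le (by linarith)
  have hupp := upper_trig hs0.le hs4.le
  rw [← hθeq] at hlow hupp
  constructor
  · rw [hsig, hrpow, sub_le_sub_iff_left]
    gcongr
  · rw [hsig, sub_le_sub_iff_left, hrpow]
    have h2 : Real.sqrt 2 * Real.sqrt 2 = 2 := Real.mul_self_sqrt (by norm_num)
    have h8 : 2*Real.sqrt 2*(2*Real.sqrt 2*Real.sin s^3) = 8*Real.sin s^3 := by
      linear_combination (4 * Real.sin s ^ 3) * h2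
    rw [div_mul_eq_mul_div, div_le_div_iff₀ (by positivity) hπ]
    have h9 : 2*Real.sqrt 2*(2*Real.sqrt 2*Real.sin s^3)*π = 8*Real.sin s^3*π := by rw [h8]
    nlinarith [mul_le_mul_of_nonneg_right hlow hπ.le, h9]
end

section
/- Fix K₀ ∈ [-1,1) and define K_ℓ = σ̂(K_{ℓ-1}) with σ̂(ρ) = (√(1-ρ²) + (π - arccos ρ)·ρ)/π. Then there exists a constant C > 0 such that 1 - K_ℓ ≤ C/ℓ² for all ℓ ≥ 1. -/
open Real

lemma keycalc {φ : ℝ} (h0 : 0 ≤ φ) (h1 : φ ≤ π / 2) :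
    2 / (3 * π) * φ ^ 3 ≤ Real.sin φ - φ * Real.cos φ := by
  set f : ℝ → ℝ := fun x => Real.sin x - x * Real.cos x - 2 / (3 * π) * x ^ 3 with hf
  have hderiv : ∀ x : ℝ, HasDerivAt f (x * Real.sin x - 2 / π * x ^ 2) x := by
    intro x
    have h := ((Real.hasDerivAt_sin x).sub
      (((hasDerivAt_id x).mul (Real.hasDerivAt_cos x)))).sub
      ((hasDerivAt_pow 3 x).const_mul (2 / (3 * π)))
    convert h using 1
    have hπ : π ≠ 0 := Real.pi_ne_zero
    case e'_4 => rfl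
    case e'_5 => rfl
    case e'_8 => rfl
    case e'_9 =>
      simp only [id]
      field_simp
      ring
  have hmono : MonotoneOn f (Set.Icc 0 (π/2)) := by
    apply monotoneOn_of_deriv_nonneg (convex_Icc _ _)
    · exact (Continuous.continuousOn (by continuity))
    · intro x hx
      exact (hderiv x).differentiableAt.differentiableWithinAt
    · intro x hx
      rw [(hderiv x).deriv]
      simp only [interior_Icc, Set.mem_Ioo] at hx
      have hj : 2 / π * x ≤ Real.sin x := Real.mul_le_sin hx.1.le hx.2.le
      nlinarith [hx.1, hx.2]
  have := hmono (Set.mem_Icc.2 ⟨le_refl 0, by positivity⟩) (Set.mem_Icc.2 ⟨h0, h1⟩) h0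
  simp [hf] at this
  linarith

lemma hatSigma_eq {ρ : ℝ} (h1 : -1 ≤ ρ) (h2 : ρ ≤ 1) :
    hatSigma ρ = (Real.sin (Real.arccos ρ) + (π - Real.arccos ρ) * Real.cos (Real.arccos ρ)) / π := by
  rw [hatSigma, Real.sin_arccos, Real.cos_arccos h1 h2]

lemma hatSigma_mem {ρ : ℝ} (h1 : -1 ≤ ρ) (h2 : ρ ≤ 1) : hatSigma ρ ∈ Set.Icc (0:ℝ) 1 := by
  rw [hatSigma_eq h1 h2]
  set θ := Real.arccos ρ with hθ
  have hθ0 : 0 ≤ θ := Real.arccos_nonneg ρ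
  have hθπ : θ ≤ π := Real.arccos_le_pi ρ
  have hπ : 0 < π := Real.pi_pos
  constructor
  · -- nonneg
    rcases le_or_gt 0 (Real.cos θ) with hc | hc
    · have hs : 0 ≤ Real.sin θ := Real.sin_nonneg_of_nonneg_of_le_pi hθ0 hθπ
      have hpt : 0 ≤ π - θ := by linarith
      exact div_nonneg (by nlinarith) hπ.le
    · -- θ ∈ (π/2, π]
      have hθhalf : π/2 ≤ θ := by
        by_contra hcon
        push_neg at hcon
        exact absurd (Real.cos_nonneg_of_mem_Icc ⟨by linarith, hcon.le⟩) (not_le.2 hc)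
      have hφ0 : 0 ≤ π - θ := by linarith
      have hφ2 : π - θ ≤ π/2 := by linarith
      have hsin : Real.sin (π - θ) = Real.sin θ := Real.sin_pi_sub θ
      have hcos : Real.cos (π - θ) = -Real.cos θ := Real.cos_pi_sub θ
      have hk := keycalc hφ0 hφ2
      have hcube : 0 ≤ 2 / (3 * π) * (π - θ) ^ 3 := by positivity
      have hnum : 0 ≤ Real.sin θ + (π - θ) * Real.cos θ := by nlinarith
      exact div_nonneg hnum hπ.le
  · -- ≤ 1
    rw [div_le_one hπ]
    have h1 : Real.sin θ ≤ θ := Real.sin_le hθ0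
    have h2 : (π - θ) * Real.cos θ ≤ (π - θ) := by
      nlinarith [Real.cos_le_one θ, Real.neg_one_le_cos θ]
    linarith

lemma hatSigma_key_s6 {ρ : ℝ} (h0 : 0 ≤ ρ) (h1 : ρ ≤ 1) :
    1 - hatSigma ρ ≤ (1 - ρ) - (1 - ρ) * Real.sqrt (1 - ρ) / 6 := by
  rw [hatSigma_eq (by linarith) h1]
  set θ := Real.arccos ρ with hθ
  have hθ0 : 0 ≤ θ := Real.arccos_nonneg ρ
  have hθhalf : θ ≤ π / 2 := Real.arccos_le_pi_div_two.2 h0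
  have hπ : 0 < π := Real.pi_pos
  have hcos : Real.cos θ = ρ := Real.cos_arccos (by linarith) h1
  have hk := keycalc hθ0 hθhalf
  -- 1 - hatSigma = (1 - ρ) - (sin θ - θ cos θ)/π
  have heq : 1 - (Real.sin θ + (π - θ) * Real.cos θ) / π
      = (1 - ρ) - (Real.sin θ - θ * Real.cos θ) / π := by
    rw [← hcos]; field_simp; ring
  rw [heq]
  have hstep : (1 - ρ) * Real.sqrt (1 - ρ) / 6 ≤ (Real.sin θ - θ * Real.cos θ) / π := by
    have hεθ : 1 - ρ ≤ θ ^ 2 / 2 := by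
      have := Real.one_sub_sq_div_two_le_cos (x := θ)
      rw [hcos] at this; linarith
    have hε0 : 0 ≤ 1 - ρ := by linarith
    have hsq : Real.sqrt (1 - ρ) ≤ θ / Real.sqrt 2 := by
      have h2 : (0:ℝ) < Real.sqrt 2 := by positivity
      rw [show θ / Real.sqrt 2 = Real.sqrt (θ^2/2) by
        rw [show θ^2/2 = (θ/Real.sqrt 2)^2 by
          rw [div_pow, Real.sq_sqrt (by norm_num : (0:ℝ) ≤ 2)]]
        rw [Real.sqrt_sq (by positivity)]]
      exact Real.sqrt_le_sqrt hεθ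
    have hmul : (1 - ρ) * Real.sqrt (1 - ρ) ≤ (θ^2/2) * (θ / Real.sqrt 2) :=
      mul_le_mul hεθ hsq (Real.sqrt_nonneg _) (by positivity)
    have h2 : (0:ℝ) < Real.sqrt 2 := by positivity
    have hs2 : Real.sqrt 2 ^ 2 = 2 := Real.sq_sqrt (by norm_num)
    have hθ3 : 0 ≤ θ^3 := by positivity
    have hπ315 : π < 3.15 := Real.pi_lt_d2
    have hπ3 : 3 < π := Real.pi_gt_three
    have hsqrt : (1.241 : ℝ) ≤ Real.sqrt 2 := by nlinarith [hs2, h2]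
    have hscal : π * (3 * π) ≤ 24 * Real.sqrt 2 := by nlinarith [hsqrt, hπ315, Real.pi_pos]
    have hconst : (θ^2/2) * (θ / Real.sqrt 2) / 6 ≤ (2 / (3 * π) * θ ^ 3) / π := by
      have he1 : (θ^2/2) * (θ / Real.sqrt 2) / 6 = θ^3 / (12 * Real.sqrt 2) := by
        field_simp; ring
      have he2 : (2 / (3 * π) * θ ^ 3) / π = 2 * θ^3 / (3 * π^2) := by
        field_simp
        try ring
        try exact Or.inl trivial
      rw [he1, he2, div_le_div_iff₀ (by positivity) (by positivity)]
      nlinarith [mul_le_mul_of_nonneg_left hscal hθ3]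
    calc (1 - ρ) * Real.sqrt (1 - ρ) / 6 ≤ (θ^2/2) * (θ / Real.sqrt 2) / 6 := by linarith
      _ ≤ (2 / (3 * π) * θ ^ 3) / π := hconst
      _ ≤ (Real.sin θ - θ * Real.cos θ) / π := by gcongr
  linarith

/-- The iterates K_ℓ = σ̂(K_{ℓ-1}) from K₀ ∈ [-1,1) satisfy 1 - K_ℓ ≤ C/ℓ²
for some constant C > 0 and all ℓ ≥ 1. -/
theorem iterates_rate (K₀ : ℝ) (h : K₀ ∈ Set.Ico (-1 : ℝ) 1)
    (K : ℕ → ℝ) (h0 : K 0 = K₀) (hrec : ∀ ℓ : ℕ, K (ℓ + 1) = hatSigma (K ℓ)) :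
    ∃ C : ℝ, 0 < C ∧ ∀ ℓ : ℕ, 1 ≤ ℓ → 1 - K ℓ ≤ C / (ℓ : ℝ) ^ 2 := by
  obtain ⟨hK₀l, hK₀u⟩ := h
  refine ⟨1296, by norm_num, ?_⟩
  have main : ∀ ℓ : ℕ, 1 ≤ ℓ →
      0 ≤ K ℓ ∧ K ℓ ≤ 1 ∧ 1 - K ℓ ≤ 1296 / (ℓ : ℝ) ^ 2 := by
    intro ℓ hℓ
    induction ℓ with
    | zero => omega
    | succ n ih =>
      rcases Nat.eq_zero_or_pos n with hn | hn
      · -- base case: ℓ = 1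
        subst hn
        have hmem := hatSigma_mem (ρ := K 0) (by rw [h0]; exact hK₀l) (by rw [h0]; linarith)
        rw [hrec 0]
        refine ⟨hmem.1, hmem.2, ?_⟩
        push_cast
        norm_num
        linarith [hmem.1]
      · -- inductive step
        obtain ⟨hk0, hk1, hkb⟩ := ih hn
        have hmem := hatSigma_mem (ρ := K n) (by linarith) hk1
        rw [hrec n]
        refine ⟨hmem.1, hmem.2, ?_⟩
        have hkey := hatSigma_key_s6 hk0 hk1
        obtain ⟨ε, hε⟩ : ∃ ε : ℝ, ε = 1 - K n := ⟨_, rfl⟩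
        rw [← hε] at hkey hkb
        have hε0 : 0 ≤ ε := by rw [hε]; linarith
        have hx1 : (1:ℝ) ≤ (n:ℝ) := by exact_mod_cast hn
        have hx0 : (0:ℝ) < (n:ℝ) := by linarith
        have hsε : 0 ≤ ε * Real.sqrt ε := by positivity
        push_cast
        by_cases hc : ε ≤ 1296 / ((n:ℝ) + 1) ^ 2
        · rw [hε] at hkey hc
          have hs3 : 0 ≤ (1 - K n) * Real.sqrt (1 - K n) :=
            mul_nonneg (by linarith) (Real.sqrt_nonneg _)
          linarith
        · push_neg at hc
          have hsq36 : (36:ℝ) / ((n:ℝ)+1) ≤ Real.sqrt ε := by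
            rw [show (36:ℝ)/((n:ℝ)+1) = Real.sqrt (1296/((n:ℝ)+1)^2) by
              rw [show (1296:ℝ)/((n:ℝ)+1)^2 = (36/((n:ℝ)+1))^2 by rw [div_pow]; norm_num,
                Real.sqrt_sq (by positivity)]]
            exact Real.sqrt_le_sqrt hc.le
          have hmul : (1296 / ((n:ℝ)+1)^2) * (36 / ((n:ℝ)+1)) ≤ ε * Real.sqrt ε :=
            mul_le_mul hc.le hsq36 (by positivity) hε0
          have halg : 1296 / (n:ℝ)^2 - (1296 / ((n:ℝ)+1)^2) * (36 / ((n:ℝ)+1)) / 6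
              ≤ 1296 / ((n:ℝ)+1)^2 := by
            rw [show (1296 / ((n:ℝ)+1)^2) * (36 / ((n:ℝ)+1)) / 6
                = 7776 / ((n:ℝ)+1)^3 by
              rw [div_mul_div_comm, div_div,
                show ((n:ℝ)+1)^2*((n:ℝ)+1)*6 = 6*((n:ℝ)+1)^3 by ring,
                show (1296:ℝ)*36 = 6*7776 by norm_num,
                mul_div_mul_left _ _ (by norm_num : (6:ℝ) ≠ 0)]]
            rw [div_sub_div _ _ (by positivity) (by positivity),
              div_le_div_iff₀ (by positivity) (by positivity)]
            nlinarith [hx1, sq_nonneg ((n:ℝ) - 1), pow_pos hx0 3, pow_pos hx0 2]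
          rw [hε] at hkey hmul
          linarith
  intro ℓ hℓ
  exact (main ℓ hℓ).2.2
end

section
/- Let S₀ ∈ [-1,1] and for L ≥ 1 with α² = 1/L², define S_{ℓ} = (S_{ℓ-1} + α²σ̂(S_{ℓ-1}))/(1+α²) for ℓ = 1,…,L, where σ̂(ρ) = (√(1-ρ²)+(π-arccos ρ)ρ)/π. Then the sequence (S_ℓ) is nondecreasing and satisfies S_ℓ ≤ S₀ + (σ̂(S₀) − S₀)·ℓ/L² for all 0 ≤ ℓ ≤ L. -/
open Real

private noncomputable def numF (ρ : ℝ) : ℝ :=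
  Real.sqrt (1 - ρ ^ 2) + (π - Real.arccos ρ) * ρ

private lemma numF_cont : Continuous numF := by
  unfold numF
  exact ((continuous_const.sub (continuous_pow 2)).sqrt).add
    ((continuous_const.sub Real.continuous_arccos).mul continuous_id)

private lemma numF_hasDerivAt {x : ℝ} (hx : x ∈ Set.Ioo (-1 : ℝ) 1) :
    HasDerivAt numF (π - Real.arccos x) x := by
  obtain ⟨h1, h2⟩ := hx
  have hne1 : x ≠ -1 := ne_of_gt h1
  have hne2 : x ≠ 1 := ne_of_lt h2
  have hpos : (0 : ℝ) < 1 - x ^ 2 := by nlinarith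
  have hsq : HasDerivAt (fun y : ℝ => Real.sqrt (1 - y ^ 2)) (-x / Real.sqrt (1 - x ^ 2)) x := by
    have hinner : HasDerivAt (fun y : ℝ => 1 - y ^ 2) (-(2 * x)) x := by
      simpa using ((hasDerivAt_pow 2 x).const_sub 1)
    have := (Real.hasDerivAt_sqrt hpos.ne').comp x hinner
    refine this.congr_deriv ?_
    field_simp
  have harc : HasDerivAt (fun y : ℝ => (π - Real.arccos y) * y)
      ((1 / Real.sqrt (1 - x ^ 2)) * x + (π - Real.arccos x)) x := by
    have h1' : HasDerivAt (fun y : ℝ => π - Real.arccos y) (1 / Real.sqrt (1 - x ^ 2)) x := by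
      simpa using (Real.hasDerivAt_arccos hne1 hne2).const_sub π
    exact (h1'.mul (hasDerivAt_id' x)).congr_deriv (by ring)
  have := hsq.add harc
  refine this.congr_deriv ?_
  have hsne : Real.sqrt (1 - x ^ 2) ≠ 0 := by positivity
  have hsq2 : Real.sqrt (1 - x ^ 2) ^ 2 = 1 - x ^ 2 := Real.sq_sqrt hpos.le
  field_simp
  ring

private lemma numF_mono : MonotoneOn numF (Set.Icc (-1 : ℝ) 1) := by
  apply monotoneOn_of_deriv_nonneg (convex_Icc _ _) numF_cont.continuousOn
  · intro x hx
    rw [interior_Icc] at hx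
    exact (numF_hasDerivAt hx).differentiableAt.differentiableWithinAt
  · intro x hx
    rw [interior_Icc] at hx
    rw [(numF_hasDerivAt hx).deriv]
    have := Real.arccos_le_pi x
    linarith

private lemma numG_anti : AntitoneOn (fun ρ => numF ρ - π * ρ) (Set.Icc (-1 : ℝ) 1) := by
  apply antitoneOn_of_deriv_nonpos (convex_Icc _ _)
    (by exact (numF_cont.sub (continuous_const.mul continuous_id)).continuousOn)
  · intro x hx
    rw [interior_Icc] at hx
    exact ((numF_hasDerivAt hx).sub ((hasDerivAt_id x).const_mul π)).differentiableAt.differentiableWithinAt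
  · intro x hx
    rw [interior_Icc] at hx
    have hd : HasDerivAt (fun ρ => numF ρ - π * ρ) (π - Real.arccos x - π * 1) x := by
      exact (numF_hasDerivAt hx).sub ((hasDerivAt_id' x).const_mul π)
    rw [hd.deriv]
    have := Real.arccos_nonneg x
    linarith

private lemma numF_one : numF 1 = π := by
  simp [numF, Real.arccos_one]

private lemma le_hatSigma {ρ : ℝ} (hρ : ρ ∈ Set.Icc (-1 : ℝ) 1) : ρ ≤ hatSigma ρ := by
  have h := numG_anti hρ (Set.mem_Icc.2 ⟨by norm_num, le_refl 1⟩) hρ.2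
  dsimp only at h
  rw [numF_one] at h
  have hπ := Real.pi_pos
  have : π * ρ ≤ numF ρ := by simpa using h
  rw [hatSigma, le_div_iff₀ hπ]
  calc ρ * π = π * ρ := by ring
    _ ≤ numF ρ := this
    _ = _ := rfl

private lemma hatSigma_le_one_s10 {ρ : ℝ} (hρ : ρ ∈ Set.Icc (-1 : ℝ) 1) : hatSigma ρ ≤ 1 := by
  have h := numF_mono hρ (Set.mem_Icc.2 ⟨by norm_num, le_refl 1⟩) hρ.2
  rw [numF_one] at h
  have hπ := Real.pi_pos
  rw [hatSigma, div_le_iff₀ hπ]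
  simpa [numF] using h

private lemma hatSigma_diff_anti {ρ₁ ρ₂ : ℝ} (h1 : ρ₁ ∈ Set.Icc (-1 : ℝ) 1)
    (h2 : ρ₂ ∈ Set.Icc (-1 : ℝ) 1) (h : ρ₁ ≤ ρ₂) :
    hatSigma ρ₂ - ρ₂ ≤ hatSigma ρ₁ - ρ₁ := by
  have hπ := Real.pi_pos
  have hg := numG_anti h1 h2 h
  have e : ∀ ρ, hatSigma ρ - ρ = (numF ρ - π * ρ) / π := by
    intro ρ
    rw [hatSigma, numF, sub_div]
    congr 1
    field_simp
  rw [e, e]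
  exact div_le_div_of_nonneg_right hg hπ.le

/-- With α² = 1/L², S₀ ∈ [-1,1] and S_ℓ = (S_{ℓ-1} + α²σ̂(S_{ℓ-1}))/(1+α²),
the sequence is nondecreasing and S_ℓ ≤ S₀ + (σ̂(S₀) - S₀)·ℓ/L² for 0 ≤ ℓ ≤ L. -/
theorem resnet_S_bounds (L : ℕ) (hL : 1 ≤ L) (S₀ : ℝ) (hS₀ : S₀ ∈ Set.Icc (-1 : ℝ) 1)
    (S : ℕ → ℝ) (h0 : S 0 = S₀)
    (hrec : ∀ ℓ : ℕ,
      S (ℓ + 1) = (S ℓ + (1 / (L : ℝ) ^ 2) * hatSigma (S ℓ)) / (1 + 1 / (L : ℝ) ^ 2)) :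
    (∀ ℓ : ℕ, ℓ < L → S ℓ ≤ S (ℓ + 1)) ∧
    (∀ ℓ : ℕ, ℓ ≤ L → S ℓ ≤ S₀ + (hatSigma S₀ - S₀) * ℓ / (L : ℝ) ^ 2) := by
  have hLpos : (0 : ℝ) < (L : ℝ) ^ 2 := by positivity
  set a : ℝ := 1 / (L : ℝ) ^ 2 with ha
  have hapos : 0 < a := by positivity
  -- invariant: S ℓ ∈ Icc and S₀ ≤ S ℓ
  have inv : ∀ ℓ : ℕ, S ℓ ∈ Set.Icc (-1 : ℝ) 1 ∧ S₀ ≤ S ℓ := by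
    intro ℓ
    induction ℓ with
    | zero => exact ⟨h0 ▸ hS₀, h0.ge⟩
    | succ n ih =>
      obtain ⟨hmem, hge⟩ := ih
      have hσ_le := hatSigma_le_one_s10 hmem
      have hσ_ge := le_hatSigma hmem
      have hden : (0 : ℝ) < 1 + a := by linarith
      constructor
      · constructor
        · rw [hrec n, le_div_iff₀ hden]
          have h1 : -1 ≤ S n := hmem.1
          have h2 : -1 ≤ hatSigma (S n) := le_trans h1 hσ_ge
          nlinarith
        · rw [hrec n, div_le_one hden]
          have h1 : S n ≤ 1 := hmem.2
          nlinarith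
      · calc S₀ ≤ S n := hge
          _ ≤ (S n + a * hatSigma (S n)) / (1 + a) := by
              rw [le_div_iff₀ hden]; nlinarith
          _ = S (n + 1) := (hrec n).symm
  have mono : ∀ ℓ : ℕ, S ℓ ≤ S (ℓ + 1) := by
    intro ℓ
    obtain ⟨hmem, _⟩ := inv ℓ
    have hσ_ge := le_hatSigma hmem
    have hden : (0 : ℝ) < 1 + a := by linarith
    rw [hrec ℓ, le_div_iff₀ hden]
    nlinarith
  refine ⟨fun ℓ _ => mono ℓ, fun ℓ _ => ?_⟩
  -- bound by induction on ℓ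
  clear hL
  induction ℓ with
  | zero => simp [h0]
  | succ n ih =>
    rename_i hn1
    have ihn := ih (by omega)
    obtain ⟨hmem, hge⟩ := inv n
    have hden : (0 : ℝ) < 1 + a := by linarith
    have hdiff : hatSigma (S n) - S n ≤ hatSigma S₀ - S₀ :=
      hatSigma_diff_anti hS₀ hmem hge
    have hstep : S (n + 1) ≤ S n + a * (hatSigma S₀ - S₀) := by
      rw [hrec n, div_le_iff₀ hden]
      have hd0 : 0 ≤ hatSigma S₀ - S₀ := sub_nonneg.2 (le_hatSigma hS₀)
      nlinarith [mul_le_mul_of_nonneg_left hdiff hapos.le,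
        mul_nonneg (mul_nonneg hapos.le hapos.le) hd0]
    have : S (n + 1) ≤ S₀ + (hatSigma S₀ - S₀) * n / (L : ℝ) ^ 2 + a * (hatSigma S₀ - S₀) := by
      linarith
    calc S (n + 1) ≤ S₀ + (hatSigma S₀ - S₀) * n / (L : ℝ) ^ 2 + a * (hatSigma S₀ - S₀) := this
      _ = S₀ + (hatSigma S₀ - S₀) * (n + 1 : ℕ) / (L : ℝ) ^ 2 := by
          push_cast
          rw [ha]
          field_simp
          ring
end

section
/- The ℓ₁-norm of the gradient of ψ_σ at a 2×2 positive definite matrix with entries a, b, c (a = top-left, c = bottom-right, b = off-diagonal) equals (1/2)·((a+c)/√(ac))·|σ̂(b/√(ac)) − (b/√(ac))·σ̂'(b/√(ac))| + σ̂'(b/√(ac)), and consequently ψ_σ is (1 + (1/π)(r/μ)²)-Lipschitz with respect to the entrywise max norm on the set of 2×2 positive definite matrices whose diagonal entries lie in [μ−r, μ+r], for any μ > 0 and 0 < r ≤ μ/2. -/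
open Real

/-- Derivative of the dual activation. -/
noncomputable def hatSigma' (ρ : ℝ) : ℝ := (π - Real.arccos ρ) / π

/-- The ReLU dual kernel ψ_σ as a function of the entries (a,b,c) of the 2×2
covariance matrix ((a,b),(b,c)): ψ_σ = √(ac)·σ̂(b/√(ac)). -/
noncomputable def psiSigma (a b c : ℝ) : ℝ :=
  Real.sqrt (a * c) * hatSigma (b / Real.sqrt (a * c))

lemma hasDerivAt_hatSigma {x : ℝ} (h : x ^ 2 < 1) :
    HasDerivAt hatSigma (hatSigma' x) x := by
  have h1 : x ≠ 1 := by intro h'; rw [h'] at h; norm_num at h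
  have h2 : x ≠ -1 := by intro h'; rw [h'] at h; norm_num at h
  have hq : 0 < 1 - x ^ 2 := by linarith
  have hqs : 0 < Real.sqrt (1 - x ^ 2) := Real.sqrt_pos.2 hq
  have hsq : HasDerivAt (fun y : ℝ => 1 - y ^ 2) (-(2 * x ^ 1)) x :=
    (hasDerivAt_pow 2 x).const_sub 1
  have hsqrt : HasDerivAt (fun y : ℝ => Real.sqrt (1 - y ^ 2))
      (1 / (2 * Real.sqrt (1 - x ^ 2)) * -(2 * x ^ 1)) x :=
    (Real.hasDerivAt_sqrt hq.ne').comp x hsq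
  have harc : HasDerivAt (fun y : ℝ => π - Real.arccos y)
      (-(-(1 / Real.sqrt (1 - x ^ 2)))) x :=
    (Real.hasDerivAt_arccos h2 h1).const_sub π
  have hmul : HasDerivAt (fun y : ℝ => (π - Real.arccos y) * y)
      ((-(-(1 / Real.sqrt (1 - x ^ 2)))) * x + (π - Real.arccos x) * 1) x :=
    harc.mul (hasDerivAt_id x)
  have := (hsqrt.add hmul).div_const π
  unfold hatSigma hatSigma'
  refine this.congr_deriv ?_
  field_simp
  ring

lemma hasDerivAt_psi {A B C : ℝ → ℝ} {A' B' C' t : ℝ}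
    (hA : HasDerivAt A A' t) (hB : HasDerivAt B B' t) (hC : HasDerivAt C C' t)
    (ha : 0 < A t) (hc : 0 < C t) (hb : (B t) ^ 2 < A t * C t) :
    HasDerivAt (fun u => psiSigma (A u) (B u) (C u))
      ((A' * C t + A t * C') / (2 * Real.sqrt (A t * C t)) *
          (hatSigma (B t / Real.sqrt (A t * C t)) -
            (B t / Real.sqrt (A t * C t)) * hatSigma' (B t / Real.sqrt (A t * C t))) +
        B' * hatSigma' (B t / Real.sqrt (A t * C t))) t := by
  have hac : 0 < A t * C t := mul_pos ha hc
  set s := Real.sqrt (A t * C t) with hs_def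
  have hs : 0 < s := Real.sqrt_pos.2 hac
  have hs2 : s ^ 2 = A t * C t := Real.sq_sqrt hac.le
  have hρ2 : (B t / s) ^ 2 < 1 := by
    rw [div_pow, hs2]
    exact (div_lt_one hac).2 hb
  have hAC : HasDerivAt (fun u => A u * C u) (A' * C t + A t * C') t := hA.mul hC
  have hS : HasDerivAt (fun u => Real.sqrt (A u * C u))
      (1 / (2 * s) * (A' * C t + A t * C')) t :=
    (Real.hasDerivAt_sqrt hac.ne').comp t hAC
  have hR : HasDerivAt (fun u => B u / Real.sqrt (A u * C u))
      ((B' * s - B t * (1 / (2 * s) * (A' * C t + A t * C'))) / s ^ 2) t :=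
    hB.div hS hs.ne'
  have hH : HasDerivAt hatSigma (hatSigma' (B t / s)) (B t / s) := hasDerivAt_hatSigma hρ2
  have hcomp : HasDerivAt (fun u => hatSigma (B u / Real.sqrt (A u * C u)))
      (hatSigma' (B t / s) *
        ((B' * s - B t * (1 / (2 * s) * (A' * C t + A t * C'))) / s ^ 2)) t :=
    by have := hH.comp t hR; exact this
  have hmain := hS.mul hcomp
  rw [← hs_def] at hmain
  unfold psiSigma
  rw [show (fun u => Real.sqrt (A u * C u) * hatSigma (B u / Real.sqrt (A u * C u))) =
      (fun y => Real.sqrt (A y * C y) * hatSigma (B y / Real.sqrt (A y * C y))) from rfl]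
  clear_value s
  refine hmain.congr_deriv ?_
  field_simp
  ring

lemma Kbound {μ r a c s : ℝ} (hμ : 0 < μ) (hr : 0 < r) (hrμ : r ≤ μ / 2)
    (ha : a ∈ Set.Icc (μ - r) (μ + r)) (hc : c ∈ Set.Icc (μ - r) (μ + r))
    (hs : 0 < s) (hs2 : s ^ 2 = a * c) :
    a + c ≤ 2 * s * (1 + (r / μ) ^ 2) := by
  have hμr : 0 < μ - r := by linarith
  have ha0 : 0 < a := lt_of_lt_of_le hμr ha.1
  have hc0 : 0 < c := lt_of_lt_of_le hμr hc.1
  have hac : 0 < a * c := mul_pos ha0 hc0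
  have h5 : μ * (a - c) ≤ r * (a + c) := by
    nlinarith [mul_le_mul_of_nonneg_left ha.2 hμr.le,
      mul_le_mul_of_nonneg_left hc.1 (by linarith : (0:ℝ) ≤ μ + r)]
  have h6 : μ * (c - a) ≤ r * (a + c) := by
    nlinarith [mul_le_mul_of_nonneg_left hc.2 hμr.le,
      mul_le_mul_of_nonneg_left ha.1 (by linarith : (0:ℝ) ≤ μ + r)]
  have h7 : (μ * (a - c)) ^ 2 ≤ (r * (a + c)) ^ 2 := sq_le_sq' (by linarith) h5
  have hq' : (a + c) ^ 2 * (μ ^ 2 - r ^ 2) ≤ 4 * (a * c) * μ ^ 2 := by nlinarith [h7]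
  have hr2 : r ^ 2 ≤ μ ^ 2 / 4 := by nlinarith
  have hstep : μ ^ 2 * r ^ 2 + r ^ 4 ≤ μ ^ 4 := by
    nlinarith [hr2, sq_nonneg r, sq_nonneg μ, mul_le_mul hr2 hr2 (sq_nonneg r) (by positivity)]
  have hpoly : μ ^ 6 ≤ (μ ^ 2 - r ^ 2) * (μ ^ 2 + r ^ 2) ^ 2 := by
    nlinarith [mul_le_mul_of_nonneg_left hstep (sq_nonneg r)]
  have hμ2 : (0:ℝ) < μ ^ 2 := by positivity
  have hq2 : (a + c) ^ 2 * μ ^ 4 ≤ 4 * (a * c) * (μ ^ 2 + r ^ 2) ^ 2 := by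
    nlinarith [mul_le_mul_of_nonneg_right hq' (sq_nonneg (μ ^ 2 + r ^ 2)),
      mul_le_mul_of_nonneg_left hpoly (sq_nonneg (a + c)), hμ2, sq_nonneg (a + c), hac]
  have hrhs0 : 0 ≤ 2 * s * (1 + (r / μ) ^ 2) := by positivity
  have h8 : (a + c) ^ 2 ≤ (2 * s * (1 + (r / μ) ^ 2)) ^ 2 := by
    have hEq : (2 * s * (1 + (r / μ) ^ 2)) ^ 2
        = 4 * (a * c) * ((μ ^ 2 + r ^ 2) ^ 2 / μ ^ 4) := by
      rw [mul_pow, mul_pow, hs2]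
      field_simp
      ring
    rw [hEq, mul_div_assoc', le_div_iff₀ (by positivity)]
    nlinarith [hq2]
  calc a + c = Real.sqrt ((a + c) ^ 2) := (Real.sqrt_sq (by positivity)).symm
    _ ≤ Real.sqrt ((2 * s * (1 + (r / μ) ^ 2)) ^ 2) := Real.sqrt_le_sqrt h8
    _ = _ := Real.sqrt_sq hrhs0

lemma grad_bound {μ r a b c : ℝ} (hμ : 0 < μ) (hr : 0 < r) (hrμ : r ≤ μ / 2)
    (ha : a ∈ Set.Icc (μ - r) (μ + r)) (hc : c ∈ Set.Icc (μ - r) (μ + r))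
    (hb : b ^ 2 < a * c) :
    (a + c) / (2 * Real.sqrt (a * c)) *
        |hatSigma (b / Real.sqrt (a * c)) -
          (b / Real.sqrt (a * c)) * hatSigma' (b / Real.sqrt (a * c))| +
      hatSigma' (b / Real.sqrt (a * c)) ≤ 1 + (1 / π) * (r / μ) ^ 2 := by
  have hμr : 0 < μ - r := by linarith
  have ha0 : 0 < a := lt_of_lt_of_le hμr ha.1
  have hc0 : 0 < c := lt_of_lt_of_le hμr hc.1
  have hac : 0 < a * c := mul_pos ha0 hc0
  have hπ : 0 < π := Real.pi_pos
  set s := Real.sqrt (a * c) with hs_def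
  have hs : 0 < s := Real.sqrt_pos.2 hac
  have hs2 : s ^ 2 = a * c := Real.sq_sqrt hac.le
  set ρ := b / s with hρ_def
  have hρ2 : ρ ^ 2 < 1 := by rw [hρ_def, div_pow, hs2]; exact (div_lt_one hac).2 hb
  have hD : hatSigma ρ - ρ * hatSigma' ρ = Real.sqrt (1 - ρ ^ 2) / π := by
    unfold hatSigma hatSigma'
    field_simp
    ring
  set P := Real.sqrt (1 - ρ ^ 2) with hP_def
  have hP0 : 0 ≤ P := Real.sqrt_nonneg _
  have hP1 : P ≤ 1 := Real.sqrt_le_one.2 (by nlinarith [sq_nonneg ρ])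
  set θ := Real.arccos ρ with hθ_def
  have hθ0 : 0 ≤ θ := Real.arccos_nonneg ρ
  have hθπ : θ ≤ π := Real.arccos_le_pi ρ
  have hPθ : P ≤ θ := by
    have := Real.sin_le hθ0
    rwa [hθ_def, Real.sin_arccos] at this
  have hσval : hatSigma' ρ = (π - θ) / π := by simp only [hatSigma', hθ_def]
  have hK2' : a + c ≤ 2 * s * (1 + (r / μ) ^ 2) := Kbound hμ hr hrμ ha hc hs hs2
  clear_value s ρ P θ
  rw [hD, abs_of_nonneg (by positivity), hσval]
  have h2s : (0:ℝ) < 2 * s := by positivity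
  have hkey : (a + c) * P ≤ (θ + (r / μ) ^ 2) * (2 * s) := by
    nlinarith [mul_le_mul_of_nonneg_right hK2' hP0,
      mul_le_mul_of_nonneg_left hPθ h2s.le,
      mul_le_mul_of_nonneg_left hP1 (by positivity : (0:ℝ) ≤ 2 * s * (r / μ) ^ 2)]
  have hdiv : (a + c) * P / (2 * s) ≤ θ + (r / μ) ^ 2 := by
    rw [div_le_iff₀ h2s]; exact hkey
  have hgoal : (a + c) / (2 * s) * (P / π) + (π - θ) / π
      = ((a + c) * P / (2 * s) + (π - θ)) / π := by ring
  rw [hgoal, div_le_iff₀ hπ,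
    show (1 + 1 / π * (r / μ) ^ 2) * π = π + (r / μ) ^ 2 by field_simp]
  linarith
lemma interp_mem {lo hi x y t : ℝ} (hx : x ∈ Set.Icc lo hi) (hy : y ∈ Set.Icc lo hi)
    (ht0 : 0 ≤ t) (ht1 : t ≤ 1) : x + t * (y - x) ∈ Set.Icc lo hi := by
  constructor
  · nlinarith [mul_nonneg (by linarith : (0:ℝ) ≤ 1 - t) (by linarith [hx.1] : (0:ℝ) ≤ x - lo),
      mul_nonneg ht0 (by linarith [hy.1] : (0:ℝ) ≤ y - lo)]
  · nlinarith [mul_nonneg (by linarith : (0:ℝ) ≤ 1 - t) (by linarith [hx.2] : (0:ℝ) ≤ hi - x),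
      mul_nonneg ht0 (by linarith [hy.2] : (0:ℝ) ≤ hi - y)]

lemma pd_convex {a b c a' b' c' t : ℝ} (ha : 0 < a) (hc : 0 < c) (ha' : 0 < a')
    (hc' : 0 < c') (hb : b ^ 2 < a * c) (hb' : b' ^ 2 < a' * c')
    (ht0 : 0 ≤ t) (ht1 : t ≤ 1) :
    (b + t * (b' - b)) ^ 2 < (a + t * (a' - a)) * (c + t * (c' - c)) := by
  have h4 : b ^ 2 * b' ^ 2 < (a * c) * (a' * c') := by
    nlinarith [mul_pos (mul_pos ha hc) (sub_pos.2 hb'), mul_nonneg (sq_nonneg b') (by linarith : (0:ℝ) ≤ a * c - b ^ 2)]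
  have h3 : 2 * b * b' < a * c' + a' * c := by
    by_contra hcon
    push_neg at hcon
    nlinarith [sq_nonneg (a * c' - a' * c), h4, mul_pos ha hc', mul_pos ha' hc]
  have e1 : 0 < a * c - b ^ 2 := by linarith
  have e2 : 0 < a' * c' - b' ^ 2 := by linarith
  have e3 : 0 < a * c' + a' * c - 2 * b * b' := by linarith
  have ht3 : 0 ≤ t * (1 - t) := mul_nonneg ht0 (by linarith)
  rcases le_or_gt t (1 / 2) with hhalf | hhalf
  · nlinarith [mul_le_mul_of_nonneg_right (show (1/4 : ℝ) ≤ (1 - t) ^ 2 by nlinarith) e1.le,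
      mul_nonneg (sq_nonneg t) e2.le, mul_nonneg ht3 e3.le]
  · nlinarith [mul_le_mul_of_nonneg_right (show (1/4 : ℝ) ≤ t ^ 2 by nlinarith) e2.le,
      mul_nonneg (sq_nonneg (1 - t)) e1.le, mul_nonneg ht3 e3.le]
lemma part1 (a b c : ℝ) (ha : 0 < a) (hc : 0 < c) (hb : b ^ 2 < a * c) :
      |deriv (fun t => psiSigma t b c) a| + |deriv (fun t => psiSigma a t c) b| +
          |deriv (fun t => psiSigma a b t) c|
        = (1 / 2) * ((a + c) / Real.sqrt (a * c)) *
            |hatSigma (b / Real.sqrt (a * c)) -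
              (b / Real.sqrt (a * c)) * hatSigma' (b / Real.sqrt (a * c))| +
          hatSigma' (b / Real.sqrt (a * c)) := by
  have hac : 0 < a * c := mul_pos ha hc
  have hs : 0 < Real.sqrt (a * c) := Real.sqrt_pos.2 hac
  have hda : deriv (fun t => psiSigma t b c) a
      = (1 * c + a * 0) / (2 * Real.sqrt (a * c)) *
          (hatSigma (b / Real.sqrt (a * c)) -
            b / Real.sqrt (a * c) * hatSigma' (b / Real.sqrt (a * c))) +
        0 * hatSigma' (b / Real.sqrt (a * c)) :=
    (hasDerivAt_psi (A := fun u => u) (B := fun _ => b) (C := fun _ => c)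
      (hasDerivAt_id a) (hasDerivAt_const a b) (hasDerivAt_const a c) ha hc hb).deriv
  have hdb : deriv (fun t => psiSigma a t c) b
      = (0 * c + a * 0) / (2 * Real.sqrt (a * c)) *
          (hatSigma (b / Real.sqrt (a * c)) -
            b / Real.sqrt (a * c) * hatSigma' (b / Real.sqrt (a * c))) +
        1 * hatSigma' (b / Real.sqrt (a * c)) :=
    (hasDerivAt_psi (A := fun _ => a) (B := fun u => u) (C := fun _ => c)
      (hasDerivAt_const b a) (hasDerivAt_id b) (hasDerivAt_const b c) ha hc hb).deriv
  have hdc : deriv (fun t => psiSigma a b t) c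
      = (0 * c + a * 1) / (2 * Real.sqrt (a * c)) *
          (hatSigma (b / Real.sqrt (a * c)) -
            b / Real.sqrt (a * c) * hatSigma' (b / Real.sqrt (a * c))) +
        0 * hatSigma' (b / Real.sqrt (a * c)) :=
    (hasDerivAt_psi (A := fun _ => a) (B := fun _ => b) (C := fun u => u)
      (hasDerivAt_const c a) (hasDerivAt_const c b) (hasDerivAt_id c) ha hc hb).deriv
  have hσnn : 0 ≤ hatSigma' (b / Real.sqrt (a * c)) :=
    div_nonneg (by linarith [Real.arccos_le_pi (b / Real.sqrt (a * c))]) Real.pi_pos.le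
  rw [hda, hdb, hdc]
  simp only [one_mul, mul_zero, zero_mul, mul_one, add_zero, zero_add, zero_div]
  rw [abs_mul, abs_mul, abs_of_nonneg hσnn,
    abs_of_nonneg (by positivity : (0:ℝ) ≤ c / (2 * Real.sqrt (a * c))),
    abs_of_nonneg (by positivity : (0:ℝ) ≤ a / (2 * Real.sqrt (a * c)))]
  field_simp
  ring
lemma part2 (μ r : ℝ) (hμ : 0 < μ) (hr : 0 < r) (hrμ : r ≤ μ / 2)
    (a b c a' b' c' : ℝ)
    (haI : a ∈ Set.Icc (μ - r) (μ + r)) (hcI : c ∈ Set.Icc (μ - r) (μ + r))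
    (haI' : a' ∈ Set.Icc (μ - r) (μ + r)) (hcI' : c' ∈ Set.Icc (μ - r) (μ + r))
    (hb : b ^ 2 < a * c) (hb' : b' ^ 2 < a' * c') :
    |psiSigma a b c - psiSigma a' b' c'|
      ≤ (1 + (1 / π) * (r / μ) ^ 2) * max (max |a - a'| |b - b'|) |c - c'| := by
  have hμr : 0 < μ - r := by linarith
  have ha0 : 0 < a := lt_of_lt_of_le hμr haI.1
  have hc0 : 0 < c := lt_of_lt_of_le hμr hcI.1
  have ha0' : 0 < a' := lt_of_lt_of_le hμr haI'.1
  have hc0' : 0 < c' := lt_of_lt_of_le hμr hcI'.1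
  set L := 1 + (1 / π) * (r / μ) ^ 2 with hL_def
  set M := max (max |a - a'| |b - b'|) |c - c'| with hM_def
  have hM0 : 0 ≤ M := le_trans (abs_nonneg (c - c')) (le_max_right _ _)
  have hMa : |a' - a| ≤ M := by
    rw [abs_sub_comm]; exact le_trans (le_max_left _ _) (le_max_left _ _)
  have hMb : |b' - b| ≤ M := by
    rw [abs_sub_comm]; exact le_trans (le_max_right _ _) (le_max_left _ _)
  have hMc : |c' - c| ≤ M := by
    rw [abs_sub_comm]; exact le_max_right _ _
  -- derivative function along the segment
  set f' : ℝ → ℝ := fun t =>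
    ((a' - a) * (c + t * (c' - c)) + (a + t * (a' - a)) * (c' - c)) /
        (2 * Real.sqrt ((a + t * (a' - a)) * (c + t * (c' - c)))) *
      (hatSigma ((b + t * (b' - b)) / Real.sqrt ((a + t * (a' - a)) * (c + t * (c' - c)))) -
        (b + t * (b' - b)) / Real.sqrt ((a + t * (a' - a)) * (c + t * (c' - c))) *
          hatSigma' ((b + t * (b' - b)) / Real.sqrt ((a + t * (a' - a)) * (c + t * (c' - c))))) +
    (b' - b) * hatSigma' ((b + t * (b' - b)) / Real.sqrt ((a + t * (a' - a)) * (c + t * (c' - c))))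
    with hf'_def
  have hAd : ∀ t : ℝ, HasDerivAt (fun u => a + u * (a' - a)) (a' - a) t := fun t => by
    simpa using ((hasDerivAt_id t).mul_const (a' - a)).const_add a
  have hBd : ∀ t : ℝ, HasDerivAt (fun u => b + u * (b' - b)) (b' - b) t := fun t => by
    simpa using ((hasDerivAt_id t).mul_const (b' - b)).const_add b
  have hCd : ∀ t : ℝ, HasDerivAt (fun u => c + u * (c' - c)) (c' - c) t := fun t => by
    simpa using ((hasDerivAt_id t).mul_const (c' - c)).const_add c
  have hfacts : ∀ t : ℝ, 0 ≤ t → t ≤ 1 →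
      (a + t * (a' - a)) ∈ Set.Icc (μ - r) (μ + r) ∧
      (c + t * (c' - c)) ∈ Set.Icc (μ - r) (μ + r) ∧
      (b + t * (b' - b)) ^ 2 < (a + t * (a' - a)) * (c + t * (c' - c)) := fun t ht0 ht1 =>
    ⟨interp_mem haI haI' ht0 ht1, interp_mem hcI hcI' ht0 ht1,
      pd_convex ha0 hc0 ha0' hc0' hb hb' ht0 ht1⟩
  have hder : ∀ t ∈ Set.Icc (0:ℝ) 1,
      HasDerivWithinAt (fun u => psiSigma (a + u * (a' - a)) (b + u * (b' - b)) (c + u * (c' - c)))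
        (f' t) (Set.Icc (0:ℝ) 1) t := by
    intro t ht
    obtain ⟨hmA, hmC, hpd⟩ := hfacts t ht.1 ht.2
    exact (hasDerivAt_psi (A := fun u => a + u * (a' - a)) (B := fun u => b + u * (b' - b))
      (C := fun u => c + u * (c' - c)) (hAd t) (hBd t) (hCd t)
      (lt_of_lt_of_le hμr hmA.1) (lt_of_lt_of_le hμr hmC.1) hpd).hasDerivWithinAt
  have hbound : ∀ t ∈ Set.Ico (0:ℝ) 1, ‖f' t‖ ≤ L * M := by
    intro t ht
    obtain ⟨hmA, hmC, hpd⟩ := hfacts t ht.1 ht.2.le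
    have hA0 : 0 < a + t * (a' - a) := lt_of_lt_of_le hμr hmA.1
    have hC0 : 0 < c + t * (c' - c) := lt_of_lt_of_le hμr hmC.1
    have hgb := grad_bound hμ hr hrμ hmA hmC hpd
    set At := a + t * (a' - a)
    set Bt := b + t * (b' - b)
    set Ct := c + t * (c' - c)
    set st := Real.sqrt (At * Ct) with hst_def
    have hst : 0 < st := Real.sqrt_pos.2 (mul_pos hA0 hC0)
    set ρt := Bt / st with hρt_def
    set σt := hatSigma' ρt with hσt_def
    have hσt0 : 0 ≤ σt :=
      div_nonneg (by linarith [Real.arccos_le_pi ρt]) Real.pi_pos.le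
    set Dt := |hatSigma ρt - ρt * hatSigma' ρt| with hDt_def
    have hDt0 : 0 ≤ Dt := abs_nonneg _
    have hnum : |(a' - a) * Ct + At * (c' - c)| ≤ M * Ct + At * M := by
      calc |(a' - a) * Ct + At * (c' - c)|
          ≤ |(a' - a) * Ct| + |At * (c' - c)| := abs_add_le _ _
        _ = |a' - a| * Ct + At * |c' - c| := by
            rw [abs_mul, abs_mul, abs_of_nonneg hC0.le, abs_of_nonneg hA0.le]
        _ ≤ M * Ct + At * M :=
            add_le_add (mul_le_mul_of_nonneg_right hMa hC0.le)
              (mul_le_mul_of_nonneg_left hMc hA0.le)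
    rw [Real.norm_eq_abs]
    calc |f' t|
        ≤ |((a' - a) * Ct + At * (c' - c)) / (2 * st) *
            (hatSigma ρt - ρt * hatSigma' ρt)| + |(b' - b) * σt| := abs_add_le _ _
      _ = |(a' - a) * Ct + At * (c' - c)| / (2 * st) * Dt + |b' - b| * σt := by
          rw [abs_mul, abs_mul, abs_div, abs_of_nonneg (by positivity : (0:ℝ) ≤ 2 * st),
            abs_of_nonneg hσt0]
      _ ≤ (M * Ct + At * M) / (2 * st) * Dt + M * σt := by
          gcongr
      _ = M * ((At + Ct) / (2 * st) * Dt + σt) := by ring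
      _ ≤ M * L := mul_le_mul_of_nonneg_left hgb hM0
      _ = L * M := mul_comm _ _
  have hlip := norm_image_sub_le_of_norm_deriv_le_segment_01' hder hbound
  have hfin : |psiSigma a' b' c' - psiSigma a b c| ≤ L * M := by
    simpa [Real.norm_eq_abs] using hlip
  rw [abs_sub_comm]
  exact hfin
/-- ℓ₁-norm of the gradient of ψ_σ at a positive definite matrix, and the
resulting local Lipschitz property of ψ_σ in the entrywise max norm on M_{μ,r}. -/
theorem psi_sigma_grad_and_lipschitz :
    (∀ a b c : ℝ, 0 < a → 0 < c → b ^ 2 < a * c →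
      |deriv (fun t => psiSigma t b c) a| + |deriv (fun t => psiSigma a t c) b| +
          |deriv (fun t => psiSigma a b t) c|
        = (1 / 2) * ((a + c) / Real.sqrt (a * c)) *
            |hatSigma (b / Real.sqrt (a * c)) -
              (b / Real.sqrt (a * c)) * hatSigma' (b / Real.sqrt (a * c))| +
          hatSigma' (b / Real.sqrt (a * c))) ∧
    (∀ μ r : ℝ, 0 < μ → 0 < r → r ≤ μ / 2 →
      ∀ a b c a' b' c' : ℝ,
        a ∈ Set.Icc (μ - r) (μ + r) → c ∈ Set.Icc (μ - r) (μ + r) →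
        a' ∈ Set.Icc (μ - r) (μ + r) → c' ∈ Set.Icc (μ - r) (μ + r) →
        b ^ 2 < a * c → b' ^ 2 < a' * c' →
        |psiSigma a b c - psiSigma a' b' c'|
          ≤ (1 + (1 / π) * (r / μ) ^ 2) * max (max |a - a'| |b - b'|) |c - c'|) :=
  ⟨part1, part2⟩
end
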